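/- If S ∈ {−1, 1}^N is an assignment satisfying all M clauses of the 3-SAT instance and φ*_j = π(1 − S_j)/2 for every variable j, then Z_m(φ*) = 0 for every clause m ∈ {1, …, M}, and consequently L_T(φ*, φ_λ) = 0 for every φ_λ ∈ ℝ^M. -/
import Mathlib


/-- Complex clause energy Z_1 for the clause X ∨ Y ∨ Z (no negated literal). -/
noncomputable def Zclause1 (x y z : ℝ) : ℂ :=
  1
    + Complex.exp (Complex.I * ((x : ℂ) - (y : ℂ)))
    + Complex.exp (Complex.I * ((x : ℂ) - (z : ℂ)))
    + Complex.exp (Complex.I * ((z : ℂ) - (y : ℂ)))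
    - Complex.exp (Complex.I * (x : ℂ))
    - Complex.exp (Complex.I * (y : ℂ))
    - Complex.exp (Complex.I * (z : ℂ))
    - Complex.exp (Complex.I * ((x : ℂ) - (y : ℂ) + (z : ℂ)))

/-- Complex clause energy Z_2 for the clause ¬X ∨ Y ∨ Z (one negated literal). -/
noncomputable def Zclause2 (x y z : ℝ) : ℂ :=
  1
    - Complex.exp (Complex.I * ((x : ℂ) - (y : ℂ)))
    - Complex.exp (Complex.I * ((x : ℂ) - (z : ℂ)))
    + Complex.exp (Complex.I * ((z : ℂ) - (y : ℂ)))
    + Complex.exp (Complex.I * (x : ℂ))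
    - Complex.exp (Complex.I * (y : ℂ))
    - Complex.exp (Complex.I * (z : ℂ))
    + Complex.exp (Complex.I * ((x : ℂ) - (y : ℂ) + (z : ℂ)))

/-- Complex clause energy Z_3 for the clause ¬X ∨ ¬Y ∨ Z (two negated literals). -/
noncomputable def Zclause3 (x y z : ℝ) : ℂ :=
  1
    + Complex.exp (Complex.I * ((x : ℂ) - (y : ℂ)))
    - Complex.exp (Complex.I * ((x : ℂ) - (z : ℂ)))
    - Complex.exp (Complex.I * ((z : ℂ) - (y : ℂ)))
    + Complex.exp (Complex.I * (x : ℂ))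
    + Complex.exp (Complex.I * (y : ℂ))
    - Complex.exp (Complex.I * (z : ℂ))
    - Complex.exp (Complex.I * ((x : ℂ) - (y : ℂ) + (z : ℂ)))

/-- Complex clause energy Z_4 for the clause ¬X ∨ ¬Y ∨ ¬Z (three negated literals). -/
noncomputable def Zclause4 (x y z : ℝ) : ℂ :=
  1
    + Complex.exp (Complex.I * ((x : ℂ) - (y : ℂ)))
    + Complex.exp (Complex.I * ((x : ℂ) - (z : ℂ)))
    + Complex.exp (Complex.I * ((z : ℂ) - (y : ℂ)))
    + Complex.exp (Complex.I * (x : ℂ))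
    + Complex.exp (Complex.I * (y : ℂ))
    + Complex.exp (Complex.I * (z : ℂ))
    + Complex.exp (Complex.I * ((x : ℂ) - (y : ℂ) + (z : ℂ)))

/-- The clause-type energy Z_t, indexed by the number of negated literals:
`ZclauseType 0 = Z_1`, `ZclauseType 1 = Z_2`, `ZclauseType 2 = Z_3`, `ZclauseType 3 = Z_4`. -/
noncomputable def ZclauseType (t : Fin 4) : ℝ → ℝ → ℝ → ℂ :=
  ![Zclause1, Zclause2, Zclause3, Zclause4] t

/-- A 3-SAT clause on `N` variables: three literals on three distinct variables,
listed with the negated literals first, so that `var k` is the variable of the k-th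
literal, which is negated iff `k < negCount`, and `negCount` is the number of negated
literals of the clause. -/
structure Clause3 (N : ℕ) where
  var : Fin 3 → Fin N
  negCount : Fin 4
  distinct : Function.Injective var

/-- The clause energy Z_m(φ) of a clause: the formula Z_t for the type t matching its
number of negated literals (negated literals coming first), applied to the phases of
its three variables. -/
noncomputable def Zm {N : ℕ} (c : Clause3 N) (phi : Fin N → ℝ) : ℂ :=
  ZclauseType c.negCount (phi (c.var 0)) (phi (c.var 1)) (phi (c.var 2))

/-- The total Lagrange function
L_T(φ, φ_λ) = ∑_m [cos φ_λ^m · Re Z_m(φ) + sin φ_λ^m · Im Z_m(φ)]. -/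
noncomputable def LagT {N M : ℕ} (C : Fin M → Clause3 N) (phi : Fin N → ℝ)
    (lam : Fin M → ℝ) : ℝ :=
  ∑ m : Fin M, (Real.cos (lam m) * (Zm (C m) phi).re + Real.sin (lam m) * (Zm (C m) phi).im)

/-- An assignment S ∈ {−1,1}^N satisfies a clause if at least one of its literals is
true: S_v = −1 for a negated literal on variable v, S_v = 1 for a positive one. -/
def ClauseSat {N : ℕ} (c : Clause3 N) (S : Fin N → ℝ) : Prop :=
  ∃ k : Fin 3, S (c.var k) = (if (k : ℕ) < (c.negCount : ℕ) then -1 else 1)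

/-- A 3-SAT instance is satisfiable if some assignment S ∈ {−1,1}^N satisfies all clauses. -/
def Satisfiable {N M : ℕ} (C : Fin M → Clause3 N) : Prop :=
  ∃ S : Fin N → ℝ, (∀ j, S j = 1 ∨ S j = -1) ∧ ∀ m : Fin M, ClauseSat (C m) S

lemma exp_phi_eq (s : ℝ) (hs : s = 1 ∨ s = -1) :
    Complex.exp (Complex.I * ((Real.pi * (1 - s) / 2 : ℝ) : ℂ)) = (s : ℂ) := by
  rcases hs with h | h <;> subst h
  · norm_num
  · have h2 : ((Real.pi * (1 - (-1)) / 2 : ℝ) : ℂ) = (Real.pi : ℂ) := by push_cast; ring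
    rw [h2, mul_comm, Complex.exp_pi_mul_I]
    norm_num

lemma exp_sub_eq (x y : ℝ) (a b : ℂ)
    (ha : Complex.exp (Complex.I * (x : ℂ)) = a)
    (hb : Complex.exp (Complex.I * (y : ℂ)) = b) (hb2 : b * b = 1) :
    Complex.exp (Complex.I * ((x : ℂ) - (y : ℂ))) = a * b := by
  calc Complex.exp (Complex.I * ((x : ℂ) - (y : ℂ)))
      = Complex.exp (Complex.I * ((x : ℂ) - (y : ℂ))) * (b * b) := by rw [hb2, mul_one]
    _ = (Complex.exp (Complex.I * ((x : ℂ) - (y : ℂ))) * Complex.exp (Complex.I * (y : ℂ))) * b := by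
        rw [hb]; ring
    _ = Complex.exp (Complex.I * ((x : ℂ) - (y : ℂ)) + Complex.I * (y : ℂ)) * b := by
        rw [Complex.exp_add]
    _ = a * b := by
        rw [show Complex.I * ((x : ℂ) - (y : ℂ)) + Complex.I * (y : ℂ) = Complex.I * (x : ℂ) by ring, ha]

lemma exp_triple_eq (x y z : ℝ) (a b c : ℂ)
    (ha : Complex.exp (Complex.I * (x : ℂ)) = a)
    (hb : Complex.exp (Complex.I * (y : ℂ)) = b)
    (hc : Complex.exp (Complex.I * (z : ℂ)) = c) (hb2 : b * b = 1) :
    Complex.exp (Complex.I * ((x : ℂ) - (y : ℂ) + (z : ℂ))) = a * b * c := by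
  calc Complex.exp (Complex.I * ((x : ℂ) - (y : ℂ) + (z : ℂ)))
      = Complex.exp (Complex.I * ((x : ℂ) - (y : ℂ) + (z : ℂ))) * (b * b) := by rw [hb2, mul_one]
    _ = (Complex.exp (Complex.I * ((x : ℂ) - (y : ℂ) + (z : ℂ))) * Complex.exp (Complex.I * (y : ℂ))) * b := by
        rw [hb]; ring
    _ = Complex.exp (Complex.I * ((x : ℂ) - (y : ℂ) + (z : ℂ)) + Complex.I * (y : ℂ)) * b := by
        rw [Complex.exp_add]
    _ = Complex.exp (Complex.I * (x : ℂ) + Complex.I * (z : ℂ)) * b := by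
        rw [show Complex.I * ((x : ℂ) - (y : ℂ) + (z : ℂ)) + Complex.I * (y : ℂ)
            = Complex.I * (x : ℂ) + Complex.I * (z : ℂ) by ring]
    _ = a * b * c := by rw [Complex.exp_add, ha, hc]; ring

section ZtEq
variable (x y z : ℝ) (a b c : ℂ)

lemma Z1_eq (ha : Complex.exp (Complex.I * (x : ℂ)) = a)
    (hb : Complex.exp (Complex.I * (y : ℂ)) = b)
    (hc : Complex.exp (Complex.I * (z : ℂ)) = c)
    (hb2 : b * b = 1) (hc2 : c * c = 1) :
    Zclause1 x y z = (1 - a) * ((1 - b) * (1 - c)) := by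
  rw [Zclause1, ha, hb, hc, exp_sub_eq x y a b ha hb hb2, exp_sub_eq x z a c ha hc hc2,
    exp_sub_eq z y c b hc hb hb2, exp_triple_eq x y z a b c ha hb hc hb2]
  ring

lemma Z2_eq (ha : Complex.exp (Complex.I * (x : ℂ)) = a)
    (hb : Complex.exp (Complex.I * (y : ℂ)) = b)
    (hc : Complex.exp (Complex.I * (z : ℂ)) = c)
    (hb2 : b * b = 1) (hc2 : c * c = 1) :
    Zclause2 x y z = (1 + a) * ((1 - b) * (1 - c)) := by
  rw [Zclause2, ha, hb, hc, exp_sub_eq x y a b ha hb hb2, exp_sub_eq x z a c ha hc hc2,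
    exp_sub_eq z y c b hc hb hb2, exp_triple_eq x y z a b c ha hb hc hb2]
  ring

lemma Z3_eq (ha : Complex.exp (Complex.I * (x : ℂ)) = a)
    (hb : Complex.exp (Complex.I * (y : ℂ)) = b)
    (hc : Complex.exp (Complex.I * (z : ℂ)) = c)
    (hb2 : b * b = 1) (hc2 : c * c = 1) :
    Zclause3 x y z = (1 + a) * ((1 + b) * (1 - c)) := by
  rw [Zclause3, ha, hb, hc, exp_sub_eq x y a b ha hb hb2, exp_sub_eq x z a c ha hc hc2,
    exp_sub_eq z y c b hc hb hb2, exp_triple_eq x y z a b c ha hb hc hb2]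
  ring

lemma Z4_eq (ha : Complex.exp (Complex.I * (x : ℂ)) = a)
    (hb : Complex.exp (Complex.I * (y : ℂ)) = b)
    (hc : Complex.exp (Complex.I * (z : ℂ)) = c)
    (hb2 : b * b = 1) (hc2 : c * c = 1) :
    Zclause4 x y z = (1 + a) * ((1 + b) * (1 + c)) := by
  rw [Zclause4, ha, hb, hc, exp_sub_eq x y a b ha hb hb2, exp_sub_eq x z a c ha hc hc2,
    exp_sub_eq z y c b hc hb hb2, exp_triple_eq x y z a b c ha hb hc hb2]
  ring

end ZtEq

lemma Zt_prod (t : Fin 4) (x y z : ℝ) (a b c : ℂ)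
    (ha : Complex.exp (Complex.I * (x : ℂ)) = a)
    (hb : Complex.exp (Complex.I * (y : ℂ)) = b)
    (hc : Complex.exp (Complex.I * (z : ℂ)) = c)
    (hb2 : b * b = 1) (hc2 : c * c = 1) :
    ZclauseType t x y z =
      (1 - (if (0 : ℕ) < (t : ℕ) then (-1 : ℂ) else 1) * a) *
      ((1 - (if (1 : ℕ) < (t : ℕ) then (-1 : ℂ) else 1) * b) *
       (1 - (if (2 : ℕ) < (t : ℕ) then (-1 : ℂ) else 1) * c)) := by
  fin_cases t
  · show Zclause1 x y z = _
    norm_num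
    linear_combination Z1_eq x y z a b c ha hb hc hb2 hc2
  · show Zclause2 x y z = _
    norm_num
    linear_combination Z2_eq x y z a b c ha hb hc hb2 hc2
  · show Zclause3 x y z = _
    norm_num
    linear_combination Z3_eq x y z a b c ha hb hc hb2 hc2
  · show Zclause4 x y z = _
    norm_num
    linear_combination Z4_eq x y z a b c ha hb hc hb2 hc2

/-- if S ∈ {−1,1}^N satisfies all clauses and φ*_j = π(1 − S_j)/2, then
Z_m(φ*) = 0 for every clause m, and consequently L_T(φ*, φ_λ) = 0 for every φ_λ. -/
theorem satisfying_assignment_zero_energy (N M : ℕ) (C : Fin M → Clause3 N)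
    (S : Fin N → ℝ) (hS : ∀ j, S j = 1 ∨ S j = -1)
    (hsat : ∀ m : Fin M, ClauseSat (C m) S) :
    (∀ m : Fin M, Zm (C m) (fun j => Real.pi * (1 - S j) / 2) = 0) ∧
      (∀ lam : Fin M → ℝ, LagT C (fun j => Real.pi * (1 - S j) / 2) lam = 0) := by
  have hsq : ∀ j, (S j : ℂ) * (S j : ℂ) = 1 := by
    intro j; rcases hS j with h | h <;> rw [h] <;> norm_num
  have h1 : ∀ m : Fin M, Zm (C m) (fun j => Real.pi * (1 - S j) / 2) = 0 := by
    intro m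
    obtain ⟨k, hk⟩ := hsat m
    have ha := exp_phi_eq (S ((C m).var 0)) (hS _)
    have hb := exp_phi_eq (S ((C m).var 1)) (hS _)
    have hc := exp_phi_eq (S ((C m).var 2)) (hS _)
    rw [Zm, Zt_prod ((C m).negCount) _ _ _ _ _ _ ha hb hc (hsq _) (hsq _)]
    fin_cases k
    · have hk' : S ((C m).var 0) = if (0 : ℕ) < (((C m).negCount : ℕ)) then (-1 : ℝ) else 1 := hk
      rw [hk']
      split_ifs <;> push_cast <;> ring
    · have hk' : S ((C m).var 1) = if (1 : ℕ) < (((C m).negCount : ℕ)) then (-1 : ℝ) else 1 := hk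
      rw [hk']
      split_ifs <;> push_cast <;> ring
    · have hk' : S ((C m).var 2) = if (2 : ℕ) < (((C m).negCount : ℕ)) then (-1 : ℝ) else 1 := hk
      rw [hk']
      split_ifs <;> push_cast <;> ring
  refine ⟨h1, fun lam => ?_⟩
  simp [LagT, h1]
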